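/- Let H₁, H₂ be complex Hilbert spaces of dimension > 1, Lᵢ = P(Hᵢ) the lattices of closed subspaces (viewed as p-lattices on the projective spaces Σᵢ = (Hᵢ \ {0})/ℂ*), and L a complete atomistic ortho-lattice on Σ₁ × Σ₂ satisfying P1–P4 with Wᵢ = U(Hᵢ) (unitary groups). Then L is not orthomodular. -/

import Mathlib

open Set

/-- For a binary relation `R` on `α` and `a ⊆ α`, the set `a^⊥ = {q : q ⊥ p for all p ∈ a}`. -/
def pol {α : Type*} (R : α → α → Prop) (a : Set α) : Set α := {q | ∀ p ∈ a, R q p}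

/-- An orthogonality relation: anti-reflexive, symmetric, singletons biorthogonally closed. -/
def IsOrthRel {α : Type*} (R : α → α → Prop) : Prop :=
  (∀ p, ¬ R p p) ∧ (∀ p q, R p q → R q p) ∧ ∀ p : α, pol R (pol R {p}) = {p}

/-- A p-lattice on `α`: contains `∅`, `univ`, all singletons, closed under arbitrary
intersections. -/
def IsPLattice {α : Type*} (L : Set (Set α)) : Prop :=
  ∅ ∈ L ∧ Set.univ ∈ L ∧ (∀ S ⊆ L, ⋂₀ S ∈ L) ∧ ∀ p : α, {p} ∈ L

/-- The join (closure) of a subset `s` in a p-lattice `L`: the intersection of all members of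
`L` containing `s`. -/
def cl {α : Type*} (L : Set (Set α)) (s : Set α) : Set α := ⋂₀ {c ∈ L | s ⊆ c}

/-- The separated-product relation `#` on `α × β`: `p # q ↔ p₁ ⊥₁ q₁ or p₂ ⊥₂ q₂`. -/
def sharp {α β : Type*} (R1 : α → α → Prop) (R2 : β → β → Prop) :
    α × β → α × β → Prop := fun p q => R1 p.1 q.1 ∨ R2 p.2 q.2

open Projectivization

/-- The lattice of closed subspaces of a Hilbert space `H`, viewed as a p-lattice on the
projective space `ℙ ℂ H`. -/
def CLat (H : Type*) [NormedAddCommGroup H] [InnerProductSpace ℂ H] :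
    Set (Set (Projectivization ℂ H)) :=
  {a | ∃ V : Submodule ℂ H, IsClosed (V : Set H) ∧
    a = {x : Projectivization ℂ H | x.submodule ≤ V}}

/-- The map induced on projective space by a unitary operator. -/
noncomputable def pmap {H : Type*} [NormedAddCommGroup H] [InnerProductSpace ℂ H]
    (u : H ≃ₗᵢ[ℂ] H) : Projectivization ℂ H → Projectivization ℂ H :=
  Projectivization.map (u.toLinearEquiv : H →ₗ[ℂ] H) u.injective

/-! ### Auxiliary lemmas -/

open scoped InnerProductSpace LinearAlgebra.Projectivization

section PolLemmas

variable {α : Type*} {R : α → α → Prop}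

lemma aux_mem_pol {a : Set α} {x : α} : x ∈ pol R a ↔ ∀ p ∈ a, R x p := Iff.rfl

lemma aux_pol_anti {a b : Set α} (h : a ⊆ b) : pol R b ⊆ pol R a :=
  fun x hx p hp => hx p (h hp)

lemma aux_subset_polpol (hs : ∀ p q, R p q → R q p) (a : Set α) :
    a ⊆ pol R (pol R a) := fun x hx q hq => hs q x (hq x hx)

lemma aux_polpolpol (hs : ∀ p q, R p q → R q p) (a : Set α) :
    pol R (pol R (pol R a)) = pol R a :=
  le_antisymm (aux_pol_anti (aux_subset_polpol hs a)) (aux_subset_polpol hs (pol R a))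

lemma aux_pol_iUnion {ι : Type*} (A : ι → Set α) :
    pol R (⋃ i, A i) = ⋂ i, pol R (A i) := by
  ext x
  simp only [pol, mem_setOf_eq, mem_iUnion, mem_iInter, forall_exists_index]
  tauto

lemma aux_pol_union (s t : Set α) : pol R (s ∪ t) = pol R s ∩ pol R t := by
  ext x
  constructor
  · intro h
    exact ⟨fun p hp => h p (Or.inl hp), fun p hp => h p (Or.inr hp)⟩
  · rintro ⟨h1, h2⟩ p (hp | hp)
    · exact h1 p hp
    · exact h2 p hp

end PolLemmas

section ProjLemmas

variable {H : Type} [NormedAddCommGroup H] [InnerProductSpace ℂ H]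

lemma aux_pmap_mk (u : H ≃ₗᵢ[ℂ] H) (v : H) (hv : v ≠ 0) :
    pmap u (mk ℂ v hv) = mk ℂ (u v) (by simp [hv]) := by
  unfold pmap
  rw [Projectivization.map_mk]
  rfl

lemma aux_mk_smul (v : H) (hv : v ≠ 0) (c : ℂ) (hc : c ≠ 0) :
    mk ℂ (c • v) (by simp [hc, hv]) = mk ℂ v hv := by
  rw [mk_eq_mk_iff']
  exact ⟨c, rfl⟩

lemma aux_pmap_refl (x : ℙ ℂ H) : pmap (LinearIsometryEquiv.refl ℂ H) x = x := by
  induction x using Projectivization.ind with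
  | h v hv =>
    rw [aux_pmap_mk]
    rw [mk_eq_mk_iff']
    exact ⟨1, by simp⟩

lemma aux_pmap_cancel (u : H ≃ₗᵢ[ℂ] H) (x : ℙ ℂ H) : pmap u (pmap u.symm x) = x := by
  induction x using Projectivization.ind with
  | h v hv =>
    rw [aux_pmap_mk, aux_pmap_mk]
    rw [mk_eq_mk_iff']
    exact ⟨1, by simp⟩

lemma aux_pmap_cancel' (u : H ≃ₗᵢ[ℂ] H) (x : ℙ ℂ H) : pmap u.symm (pmap u x) = x := by
  induction x using Projectivization.ind with
  | h v hv =>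
    rw [aux_pmap_mk, aux_pmap_mk]
    rw [mk_eq_mk_iff']
    exact ⟨1, by simp⟩

lemma aux_pmap_inj (u : H ≃ₗᵢ[ℂ] H) {x y : ℙ ℂ H} (h : pmap u x = pmap u y) : x = y := by
  rw [← aux_pmap_cancel' u x, h, aux_pmap_cancel' u y]

variable [CompleteSpace H]

lemma aux_refl_formula (b : H) (v : H) :
    Submodule.reflection ((ℂ ∙ b)ᗮ) v = v - 2 • (⟪b, v⟫_ℂ / ⟪b, b⟫_ℂ) • b := by
  rw [Submodule.reflection_orthogonal_apply, Submodule.reflection_singleton_apply, inner_self_eq_norm_sq_to_K]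
  abel_nf

lemma aux_exists_pmap_eq (x y : ℙ ℂ H) : ∃ u : H ≃ₗᵢ[ℂ] H, pmap u x = y := by
  obtain ⟨v, hv, rfl⟩ : ∃ v hv, mk ℂ v hv = x := ⟨x.rep, x.rep_nonzero, x.mk_rep⟩
  obtain ⟨w, hw, rfl⟩ : ∃ w hw, mk ℂ w hw = y := ⟨y.rep, y.rep_nonzero, y.mk_rep⟩
  set a : H := ((‖v‖ : ℂ))⁻¹ • v with ha_def
  set b0 : H := ((‖w‖ : ℂ))⁻¹ • w with hb0_def
  have hvn : (‖v‖ : ℂ) ≠ 0 := by simpa using hv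
  have hwn : (‖w‖ : ℂ) ≠ 0 := by simpa using hw
  have ha : a ≠ 0 := smul_ne_zero (inv_ne_zero hvn) hv
  have hb0 : b0 ≠ 0 := smul_ne_zero (inv_ne_zero hwn) hw
  have hna : ‖a‖ = 1 := by
    rw [ha_def, norm_smul]
    simp [norm_inv, hv, norm_ne_zero_iff.mpr hv]
  have hnb0 : ‖b0‖ = 1 := by
    rw [hb0_def, norm_smul]
    simp [norm_inv, hw, norm_ne_zero_iff.mpr hw]
  have hmka : mk ℂ a ha = mk ℂ v hv := aux_mk_smul v hv _ (inv_ne_zero hvn)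
  have hmkb : mk ℂ b0 hb0 = mk ℂ w hw := aux_mk_smul w hw _ (inv_ne_zero hwn)
  set z : ℂ := ⟪a, b0⟫_ℂ with hz_def
  set c : ℂ := if z = 0 then 1 else (starRingEnd ℂ) z / (‖z‖ : ℂ) with hc_def
  have hc : c ≠ 0 := by
    rw [hc_def]
    split_ifs with h
    · exact one_ne_zero
    · apply div_ne_zero
      · simpa using h
      · simpa using h
  set y' : H := c • b0 with hy'_def
  have hy' : y' ≠ 0 := smul_ne_zero hc hb0
  have hny' : ‖y'‖ = 1 := by
    rw [hy'_def, norm_smul, hnb0, mul_one]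
    rw [hc_def]
    split_ifs with h
    · simp
    · simp only [norm_div]
      rw [Complex.norm_real, Real.norm_eq_abs,
        abs_of_nonneg (norm_nonneg z), Complex.norm_conj,
        div_self (norm_ne_zero_iff.mpr h)]
  have hmky' : mk ℂ y' hy' = mk ℂ w hw := (aux_mk_smul b0 hb0 c hc).trans hmkb
  set t : ℂ := ⟪a, y'⟫_ℂ with ht_def
  have htz : t = c * z := by rw [ht_def, hy'_def, inner_smul_right]
  have hconj : (starRingEnd ℂ) t = t := by
    rw [htz, map_mul, hc_def]
    split_ifs with h
    · simp [h]
    · rw [map_div₀]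
      simp only [Complex.conj_conj, Complex.conj_ofReal]
      ring
  by_cases hby : a - y' = 0
  · refine ⟨LinearIsometryEquiv.refl ℂ H, ?_⟩
    rw [← hmka, aux_pmap_mk]
    have h1 : mk ℂ ((LinearIsometryEquiv.refl ℂ H) a) (by simp [ha]) = mk ℂ y' hy' := by
      apply (mk_eq_mk_iff' ℂ _ _ _ _).mpr
      exact ⟨1, by simpa using (sub_eq_zero.mp hby).symm⟩
    exact h1.trans hmky'
  · refine ⟨Submodule.reflection ((ℂ ∙ (a - y'))ᗮ), ?_⟩
    have hya : ⟪y', a⟫_ℂ = t := by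
      rw [← inner_conj_symm y' a, ← ht_def, hconj]
    have hba : ⟪a - y', a⟫_ℂ = 1 - t := by
      rw [inner_sub_left, inner_self_eq_norm_sq_to_K, hna, hya]
      norm_num
    have hbb : ⟪a - y', a - y'⟫_ℂ = 2 - 2*t := by
      rw [inner_sub_left, inner_sub_right, inner_sub_right,
        inner_self_eq_norm_sq_to_K, inner_self_eq_norm_sq_to_K, hna, hny', hya, ← ht_def]
      push_cast
      ring
    have hne : ⟪a - y', a - y'⟫_ℂ ≠ 0 := inner_self_ne_zero.mpr hby
    have h2t : (2 : ℂ) - 2*t ≠ 0 := hbb ▸ hne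
    have h1t : (1 : ℂ) - t ≠ 0 := by
      intro h
      apply h2t
      rw [show (2:ℂ) - 2*t = 2*(1 - t) by ring, h, mul_zero]
    have key : Submodule.reflection ((ℂ ∙ (a - y'))ᗮ) a = y' := by
      rw [aux_refl_formula (a - y') a, hba, hbb]
      rw [show (1 - t)/(2 - 2*t) = 2⁻¹ by field_simp]
      rw [two_smul, ← add_smul]
      norm_num
    rw [← hmka, aux_pmap_mk]
    have h1 : mk ℂ ((Submodule.reflection ((ℂ ∙ (a - y'))ᗮ)) a) (by simp [ha]) = mk ℂ y' hy' := by
      apply (mk_eq_mk_iff' ℂ _ _ _ _).mpr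
      exact ⟨1, by simp [key]⟩
    exact h1.trans hmky'

end ProjLemmas

section CLatLemmas

variable {H : Type} [NormedAddCommGroup H] [InnerProductSpace ℂ H]

lemma aux_CLat_empty : (∅ : Set (ℙ ℂ H)) ∈ CLat H := by
  refine ⟨⊥, by rw [Submodule.bot_coe]; exact isClosed_singleton, ?_⟩
  ext x
  simp only [mem_empty_iff_false, mem_setOf_eq, false_iff, le_bot_iff]
  rw [Projectivization.submodule_eq]
  simp [Submodule.span_singleton_eq_bot, x.rep_nonzero]

lemma aux_CLat_singleton (p : ℙ ℂ H) : ({p} : Set (ℙ ℂ H)) ∈ CLat H := by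
  refine ⟨p.submodule, Submodule.closed_of_finiteDimensional _, ?_⟩
  ext x
  simp only [mem_singleton_iff, mem_setOf_eq]
  constructor
  · rintro rfl; exact le_rfl
  · intro hx
    rw [Projectivization.submodule_eq, Projectivization.submodule_eq,
      Submodule.span_singleton_le_iff_mem, Submodule.mem_span_singleton] at hx
    obtain ⟨a, hax⟩ := hx
    rw [← x.mk_rep, ← p.mk_rep]
    rw [mk_eq_mk_iff']
    exact ⟨a, hax⟩

lemma aux_exists_indep (hd : 1 < Module.rank ℂ H) (w : H) :
    ∃ u : H, u ∉ (ℂ ∙ w : Submodule ℂ H) := by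
  by_contra h
  push_neg at h
  have : Module.rank ℂ H ≤ 1 := by
    rw [rank_le_one_iff]
    refine ⟨w, fun v => ?_⟩
    obtain ⟨r, hr⟩ := Submodule.mem_span_singleton.mp (h v)
    exact ⟨r, hr⟩
  exact absurd hd (not_lt.mpr this)

lemma aux_exists_point (hd : 1 < Module.rank ℂ H) : Nonempty (ℙ ℂ H) := by
  obtain ⟨u, hu⟩ := aux_exists_indep hd 0
  have hu0 : u ≠ 0 := fun h => hu (by rw [h]; exact Submodule.zero_mem _)
  exact ⟨mk ℂ u hu0⟩

lemma aux_exists_point_ne (hd : 1 < Module.rank ℂ H) (m : ℙ ℂ H) : ∃ n : ℙ ℂ H, n ≠ m := by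
  obtain ⟨u, hu⟩ := aux_exists_indep hd m.rep
  have hu0 : u ≠ 0 := fun h => hu (h ▸ Submodule.zero_mem _)
  refine ⟨mk ℂ u hu0, fun h => ?_⟩
  rw [← m.mk_rep, mk_eq_mk_iff'] at h
  obtain ⟨a, ha⟩ := h
  exact hu (ha ▸ Submodule.smul_mem _ a (Submodule.mem_span_singleton_self _))

lemma aux_CLat_cosingleton (hd : 1 < Module.rank ℂ H) {s : Set (ℙ ℂ H)} (hs : s ∈ CLat H)
    (w1 : ℙ ℂ H) (h : ∀ x, x ≠ w1 → x ∈ s) : w1 ∈ s := by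
  obtain ⟨V, -, rfl⟩ := hs
  obtain ⟨u, hu⟩ := aux_exists_indep hd w1.rep
  have hu0 : u ≠ 0 := fun h => hu (h ▸ Submodule.zero_mem _)
  have huw0 : u + w1.rep ≠ 0 := by
    intro h
    apply hu
    have : u = -w1.rep := by rw [eq_neg_iff_add_eq_zero]; exact h
    rw [this]
    exact Submodule.neg_mem _ (Submodule.mem_span_singleton_self _)
  have h1 : mk ℂ u hu0 ≠ w1 := by
    intro hh
    rw [← w1.mk_rep, mk_eq_mk_iff'] at hh
    obtain ⟨a, ha⟩ := hh
    exact hu (ha ▸ Submodule.smul_mem _ a (Submodule.mem_span_singleton_self _))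
  have h2 : mk ℂ (u + w1.rep) huw0 ≠ w1 := by
    intro hh
    apply hu
    have hsub := congrArg Projectivization.submodule hh
    rw [Projectivization.submodule_mk, Projectivization.submodule_eq] at hsub
    have hm : u + w1.rep ∈ Submodule.span ℂ {w1.rep} :=
      hsub ▸ Submodule.mem_span_singleton_self _
    have he : u = (u + w1.rep) - w1.rep := by abel
    rw [he]
    exact Submodule.sub_mem _ hm (Submodule.mem_span_singleton_self _)
  have m1 := h _ h1
  have m2 := h _ h2
  simp only [mem_setOf_eq, Projectivization.submodule_mk,
    Submodule.span_singleton_le_iff_mem] at m1 m2 ⊢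
  rw [Projectivization.submodule_eq, Submodule.span_singleton_le_iff_mem]
  have hw : w1.rep = (u + w1.rep) - u := by abel
  rw [hw]
  exact Submodule.sub_mem _ m2 m1

end CLatLemmas

/-- (Theorem 1 of the paper, orthomodularity part.) For Hilbert spaces
`H₁, H₂` of dimension `> 1` and a cao-lattice `L` on `ℙH₁ × ℙH₂` (realized by an
orthogonality relation `⊥`) satisfying P1–P4 with `Wᵢ = U(Hᵢ)`, `L` is not orthomodular. -/
theorem stmt8
    {H1 H2 : Type} [NormedAddCommGroup H1] [InnerProductSpace ℂ H1] [CompleteSpace H1]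
    [NormedAddCommGroup H2] [InnerProductSpace ℂ H2] [CompleteSpace H2]
    (hd1 : 1 < Module.rank ℂ H1) (hd2 : 1 < Module.rank ℂ H2)
    (R : Projectivization ℂ H1 × Projectivization ℂ H2 →
         Projectivization ℂ H1 × Projectivization ℂ H2 → Prop)
    (hR : IsOrthRel R)
    (L : Set (Set (Projectivization ℂ H1 × Projectivization ℂ H2)))
    (hL : L = {a | pol R (pol R a) = a})
    (hP2 : ∀ a1 ∈ CLat H1, ∀ a2 ∈ CLat H2,
      (a1 ×ˢ (univ : Set (Projectivization ℂ H2))) ∪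
        ((univ : Set (Projectivization ℂ H1)) ×ˢ a2) ∈ L)
    (hP3₁ : ∀ a1 : Set (Projectivization ℂ H1),
      a1 ×ˢ (univ : Set (Projectivization ℂ H2)) ∈ L → a1 ∈ CLat H1)
    (hP3₂ : ∀ a2 : Set (Projectivization ℂ H2),
      (univ : Set (Projectivization ℂ H1)) ×ˢ a2 ∈ L → a2 ∈ CLat H2)
    (hP4 : ∀ a ∈ L, ∀ (u1 : H1 ≃ₗᵢ[ℂ] H1) (u2 : H2 ≃ₗᵢ[ℂ] H2),
      Prod.map (pmap u1) (pmap u2) '' a ∈ L) :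
    -- `L` is not orthomodular
    ¬ (∀ a ∈ L, ∀ b ∈ L, a ⊆ b → b = pol R (pol R (a ∪ (b ∩ pol R a)))) := by
  intro hOM
  obtain ⟨hirr, hsymm, hpt⟩ := hR
  have hmemL : ∀ s, s ∈ L ↔ pol R (pol R s) = s := by
    intro s
    rw [hL]
    exact Iff.rfl
  have hpolL : ∀ s, pol R s ∈ L := fun s => (hmemL _).2 (aux_polpolpol hsymm s)
  have hsingL : ∀ p, ({p} : Set (Projectivization ℂ H1 × Projectivization ℂ H2)) ∈ L :=
    fun p => (hmemL _).2 (hpt p)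
  have hLinter : ∀ s t, s ∈ L → t ∈ L → s ∩ t ∈ L := by
    intro s t hs ht
    have : s ∩ t = pol R (pol R s ∪ pol R t) := by
      rw [aux_pol_union, (hmemL s).1 hs, (hmemL t).1 ht]
    rw [this]
    exact hpolL _
  have hLiInter : ∀ {ι : Type} (A : ι → Set (Projectivization ℂ H1 × Projectivization ℂ H2)),
      (∀ i, A i ∈ L) → (⋂ i, A i) ∈ L := by
    intro ι A hA
    have : (⋂ i, A i) = pol R (⋃ i, pol R (A i)) := by
      rw [aux_pol_iUnion]
      exact (iInter_congr fun i => ((hmemL _).1 (hA i)).symm)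
    rw [this]
    exact hpolL _
  -- columns and rows are in L
  have hcol : ∀ w1 : ℙ ℂ H1, ({w1} ×ˢ (univ : Set (ℙ ℂ H2))) ∈ L := by
    intro w1
    have := hP2 {w1} (aux_CLat_singleton w1) ∅ aux_CLat_empty
    simpa using this
  have hrow : ∀ m : ℙ ℂ H2, ((univ : Set (ℙ ℂ H1)) ×ˢ ({m} : Set (ℙ ℂ H2))) ∈ L := by
    intro m
    have := hP2 ∅ aux_CLat_empty {m} (aux_CLat_singleton m)
    simpa using this
  -- Step B : off-cross pairs are orthogonal
  have hH : ∀ p q : ℙ ℂ H1 × ℙ ℂ H2, p.1 ≠ q.1 → p.2 ≠ q.2 → R p q := by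
    have main : ∀ p q : ℙ ℂ H1 × ℙ ℂ H2, p.1 ≠ q.1 → p.2 ≠ q.2 → R q p := by
      rintro ⟨p1, p2⟩ ⟨q1, q2⟩ h1 h2
      simp only at h1 h2
      by_contra hn
      set s1 := (({p1} : Set (ℙ ℂ H1)) ×ˢ (univ : Set (ℙ ℂ H2))) ∪
        ((univ : Set (ℙ ℂ H1)) ×ˢ ({q2} : Set (ℙ ℂ H2))) with hs1_def
      set s2 := (({q1} : Set (ℙ ℂ H1)) ×ˢ (univ : Set (ℙ ℂ H2))) ∪
        ((univ : Set (ℙ ℂ H1)) ×ˢ ({p2} : Set (ℙ ℂ H2))) with hs2_def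
      have hs1 : s1 ∈ L := hP2 _ (aux_CLat_singleton p1) _ (aux_CLat_singleton q2)
      have hs2 : s2 ∈ L := hP2 _ (aux_CLat_singleton q1) _ (aux_CLat_singleton p2)
      have hset : s1 ∩ s2 = {((p1, p2) : ℙ ℂ H1 × ℙ ℂ H2), (q1, q2)} := by
        ext ⟨x1, x2⟩
        simp only [hs1_def, hs2_def, mem_inter_iff, mem_union, mem_prod, mem_univ,
          and_true, true_and, mem_singleton_iff, mem_insert_iff, Prod.mk.injEq]
        constructor
        · rintro ⟨ha | ha, hb | hb⟩
          · exact absurd (ha.symm ▸ hb) h1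
          · exact Or.inl ⟨ha, hb⟩
          · exact Or.inr ⟨hb, ha⟩
          · exact absurd (hb ▸ ha) h2
        · rintro (⟨rfl, rfl⟩ | ⟨rfl, rfl⟩)
          · exact ⟨Or.inl rfl, Or.inr rfl⟩
          · exact ⟨Or.inr rfl, Or.inl rfl⟩
      have hb : ({((p1, p2) : ℙ ℂ H1 × ℙ ℂ H2), (q1, q2)} : Set _) ∈ L :=
        hset ▸ hLinter s1 s2 hs1 hs2
      have hsub : ({((p1, p2) : ℙ ℂ H1 × ℙ ℂ H2)} : Set _) ⊆ {(p1, p2), (q1, q2)} := by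
        intro x hx
        rw [hx]
        exact mem_insert _ _
      have hom := hOM _ (hsingL (p1, p2)) _ hb hsub
      have hempty : ({((p1, p2) : ℙ ℂ H1 × ℙ ℂ H2), (q1, q2)} : Set _) ∩
          pol R {((p1, p2) : ℙ ℂ H1 × ℙ ℂ H2)} = ∅ := by
        ext x
        simp only [mem_inter_iff, mem_insert_iff, mem_singleton_iff, mem_empty_iff_false,
          iff_false, not_and]
        rintro (rfl | rfl) hx
        · exact hirr _ (hx _ rfl)
        · exact hn (hx _ rfl)
      rw [hempty, union_empty, hpt] at hom
      have : ((q1, q2) : ℙ ℂ H1 × ℙ ℂ H2) ∈ ({(p1, p2)} : Set _) := by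
        rw [← hom]
        exact mem_insert_iff.mpr (Or.inr rfl)
      rw [mem_singleton_iff, Prod.mk.injEq] at this
      exact h1 this.1.symm
    intro p q h1 h2
    exact hsymm _ _ (main p q h1 h2)
  -- Step C : the relation sets within a column/row are CLat sets
  have hNcol : ∀ (w1 : ℙ ℂ H1) (m : ℙ ℂ H2), {k : ℙ ℂ H2 | R (w1, k) (w1, m)} ∈ CLat H2 := by
    intro w1 m
    apply hP3₂
    have hEq : ((univ : Set (ℙ ℂ H1)) ×ˢ {k : ℙ ℂ H2 | R (w1, k) (w1, m)}) =
        ⋂ (u : H1 ≃ₗᵢ[ℂ] H1),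
          (Prod.map (pmap u) (pmap (LinearIsometryEquiv.refl ℂ H2)) ''
            pol R {((w1, m) : ℙ ℂ H1 × ℙ ℂ H2)}) := by
      ext ⟨x1, x2⟩
      simp only [mem_prod, mem_univ, true_and, mem_setOf_eq, mem_iInter, mem_image]
      constructor
      · intro hx2 u
        have hx2m : x2 ≠ m := by
          rintro rfl
          exact hirr _ hx2
        refine ⟨(pmap u.symm x1, x2), ?_, ?_⟩
        · intro e he
          rw [mem_singleton_iff] at he
          subst he
          by_cases hy1 : pmap u.symm x1 = w1
          · rw [hy1]
            exact hx2
          · exact hH _ _ hy1 hx2m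
        · simp [Prod.map, aux_pmap_cancel, aux_pmap_refl]
      · intro hx
        obtain ⟨u, hu⟩ := aux_exists_pmap_eq w1 x1
        obtain ⟨⟨y1, y2⟩, hy, hmap⟩ := hx u
        simp only [Prod.map, Prod.mk.injEq] at hmap
        rw [aux_pmap_refl] at hmap
        have hy1 : y1 = w1 := by
          apply aux_pmap_inj u
          rw [hmap.1, hu]
        have hR' := hy (w1, m) rfl
        rw [hy1, hmap.2] at hR'
        exact hR'
    rw [hEq]
    exact hLiInter _ (fun u => hP4 _ (hpolL _) u _)
  have hNrow : ∀ (w1 : ℙ ℂ H1) (m : ℙ ℂ H2), {y1 : ℙ ℂ H1 | R (y1, m) (w1, m)} ∈ CLat H1 := by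
    intro w1 m
    apply hP3₁
    have hEq : ({y1 : ℙ ℂ H1 | R (y1, m) (w1, m)} ×ˢ (univ : Set (ℙ ℂ H2))) =
        ⋂ (u : H2 ≃ₗᵢ[ℂ] H2),
          (Prod.map (pmap (LinearIsometryEquiv.refl ℂ H1)) (pmap u) ''
            pol R {((w1, m) : ℙ ℂ H1 × ℙ ℂ H2)}) := by
      ext ⟨x1, x2⟩
      simp only [mem_prod, mem_univ, and_true, mem_setOf_eq, mem_iInter, mem_image]
      constructor
      · intro hx1 u
        have hx1w : x1 ≠ w1 := by
          rintro rfl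
          exact hirr _ hx1
        refine ⟨(x1, pmap u.symm x2), ?_, ?_⟩
        · intro e he
          rw [mem_singleton_iff] at he
          subst he
          by_cases hy2 : pmap u.symm x2 = m
          · rw [hy2]
            exact hx1
          · exact hH _ _ hx1w hy2
        · simp [Prod.map, aux_pmap_cancel, aux_pmap_refl]
      · intro hx
        obtain ⟨u, hu⟩ := aux_exists_pmap_eq m x2
        obtain ⟨⟨y1, y2⟩, hy, hmap⟩ := hx u
        simp only [Prod.map, Prod.mk.injEq] at hmap
        rw [aux_pmap_refl] at hmap
        have hy2 : y2 = m := by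
          apply aux_pmap_inj u
          rw [hmap.2, hu]
        have hR' := hy (w1, m) rfl
        rw [hy2, hmap.1] at hR'
        exact hR'
    rw [hEq]
    exact hLiInter _ (fun u => hP4 _ (hpolL _) (LinearIsometryEquiv.refl ℂ H1) u)
  -- choose points
  obtain ⟨w1⟩ := aux_exists_point hd1
  obtain ⟨m⟩ := aux_exists_point hd2
  -- Step D : find z1 outside {w1} ∪ N'
  have hNrow' := hNrow w1 m
  have hz1 : ∃ z1 : ℙ ℂ H1, z1 ≠ w1 ∧ ¬ R (z1, m) (w1, m) := by
    by_contra hcon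
    push_neg at hcon
    have hall : ∀ x : ℙ ℂ H1, x ≠ w1 → x ∈ {y1 : ℙ ℂ H1 | R (y1, m) (w1, m)} := by
      intro x hx
      exact hcon x hx
    have := aux_CLat_cosingleton hd1 hNrow' w1 hall
    exact hirr _ this
  obtain ⟨z1, hz1w, hz1n⟩ := hz1
  -- Step E : orthomodularity applied to {(w1,m)} ⊆ univ ×ˢ {m}
  have ha : ({((w1, m) : ℙ ℂ H1 × ℙ ℂ H2)} : Set _) ∈ L := hsingL _
  have hbL : ((univ : Set (ℙ ℂ H1)) ×ˢ ({m} : Set (ℙ ℂ H2))) ∈ L := hrow m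
  have hsub : ({((w1, m) : ℙ ℂ H1 × ℙ ℂ H2)} : Set _) ⊆
      (univ : Set (ℙ ℂ H1)) ×ˢ ({m} : Set (ℙ ℂ H2)) := by
    intro x hx
    rw [mem_singleton_iff] at hx
    subst hx
    simp
  have hom := hOM _ ha _ hbL hsub
  -- deduce that every n ≠ m is column-orthogonal to m at z1
  have key : ∀ n : ℙ ℂ H2, n ≠ m → R (z1, n) (z1, m) := by
    intro n hn
    set cSet := ({((w1, m) : ℙ ℂ H1 × ℙ ℂ H2)} : Set _) ∪
      (((univ : Set (ℙ ℂ H1)) ×ˢ ({m} : Set (ℙ ℂ H2))) ∩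
        pol R ({((w1, m) : ℙ ℂ H1 × ℙ ℂ H2)} : Set _)) with hc_def
    have h1 : (z1, n) ∈ pol R cSet := by
      intro e he
      rw [hc_def, mem_union] at he
      rcases he with he | he
      · rw [mem_singleton_iff] at he
        subst he
        exact hH _ _ hz1w hn
      · obtain ⟨e1, e2⟩ := e
        obtain ⟨he1, he2⟩ := he
        rw [mem_prod, mem_singleton_iff] at he1
        have hem : e2 = m := he1.2
        subst hem
        have he2' : R (e1, e2) (w1, e2) := he2 _ rfl
        have hz1e : z1 ≠ e1 := fun h => hz1n (by rw [h]; exact he2')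
        exact hH _ _ hz1e hn
    have h2 : pol R cSet = pol R ((univ : Set (ℙ ℂ H1)) ×ˢ ({m} : Set (ℙ ℂ H2))) := by
      conv_rhs => rw [hom]
      rw [aux_polpolpol hsymm]
    rw [h2] at h1
    exact h1 (z1, m) (by simp)
  -- contradiction via CLat structure of the column set
  have hNcol' := hNcol z1 m
  have hmem : m ∈ {k : ℙ ℂ H2 | R (z1, k) (z1, m)} :=
    aux_CLat_cosingleton hd2 hNcol' m (fun x hx => key x hx)
  exact hirr _ hmem
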